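/- Let (Y, F) be a topological fractal and let Z be a finite union of continuous images of Y such that Y ∩ Z = {x₀} is a singleton. Extending each f ∈ F to Y ∪ Z by the constant value f(x₀) on Z, and each p ∈ P (with P(Y) = Z) by the constant value p(x₀) on Z, yields a family making Y ∪ Z the underlying space of a topological fractal. -/

import Mathlib

open Set

/-- Composition of a list of self-maps. -/
def Comp {X : Type*} (l : List (X → X)) : X → X := l.foldr (· ∘ ·) id

/-- `F` is a topologically contracting system on `Y ⊆ X`. -/
def TopContracting {X : Type*} [TopologicalSpace X] (F : Set (X → X)) (Y : Set X) : Prop :=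
  ∀ 𝒰 : Set (Set X), (∀ U ∈ 𝒰, IsOpen U) → Y ⊆ ⋃₀ 𝒰 →
    ∃ n : ℕ, ∀ l : List (X → X), l.length = n → (∀ f ∈ l, f ∈ F) →
      ∃ U ∈ 𝒰, Comp l '' Y ⊆ U

/-- `(Y, F)` is a topological fractal, where `Y` is a compact subset of an ambient space. -/
def TopFractalOn {X : Type*} [TopologicalSpace X] (F : Set (X → X)) (Y : Set X) : Prop :=
  IsCompact Y ∧ F.Finite ∧ (∀ f ∈ F, ContinuousOn f Y ∧ f '' Y ⊆ Y) ∧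
    (⋃ f ∈ F, f '' Y) = Y ∧ TopContracting F Y

theorem comp_nil' {X : Type*} : Comp ([] : List (X → X)) = id := rfl

theorem comp_cons' {X : Type*} (g : X → X) (l : List (X → X)) :
    Comp (g :: l) = g ∘ Comp l := rfl

theorem comp_append' {X : Type*} (l₁ l₂ : List (X → X)) :
    Comp (l₁ ++ l₂) = Comp l₁ ∘ Comp l₂ := by
  induction l₁ with
  | nil => rfl
  | cons g l ih => simp [List.cons_append, comp_cons', ih, Function.comp_assoc]

theorem comp_maps' {X : Type*} {S : Set X} :
    ∀ {l : List (X → X)}, (∀ f ∈ l, f '' S ⊆ S) → Comp l '' S ⊆ S := by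
  intro l
  induction l with
  | nil => intro _; simp [comp_nil']
  | cons g l ih =>
    intro h
    rw [comp_cons', Set.image_comp]
    exact (Set.image_mono (f := g) (ih fun f hf => h f (List.mem_cons_of_mem _ hf))).trans
      (h g (List.mem_cons_self))

theorem words_mono' {X : Type*} {F : Set (X → X)} {Y : Set X}
    (hF : ∀ f ∈ F, f '' Y ⊆ Y) (Q : Set X → Prop)
    (hQ : ∀ S T : Set X, S ⊆ T → Q T → Q S) {n m : ℕ} (hnm : n ≤ m)
    (h : ∀ l : List (X → X), l.length = n → (∀ f ∈ l, f ∈ F) → Q (Comp l '' Y)) :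
    ∀ l : List (X → X), l.length = m → (∀ f ∈ l, f ∈ F) → Q (Comp l '' Y) := by
  intro l hl hmem
  have h1 : (l.take n).length = n := by
    rw [List.length_take, hl]; exact min_eq_left hnm
  have hc : Comp l = Comp (l.take n) ∘ Comp (l.drop n) := by
    rw [← comp_append', List.take_append_drop]
  have hsub : Comp l '' Y ⊆ Comp (l.take n) '' Y := by
    rw [hc, Set.image_comp]
    exact Set.image_mono (comp_maps' fun f hf => hF f (hmem f (List.mem_of_mem_drop hf)))
  exact hQ _ _ hsub (h _ h1 fun f hf => hmem f (List.mem_of_mem_take hf))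

open scoped Classical in
theorem stmt7 {W : Type*} [TopologicalSpace W] [T2Space W] (Y Z : Set W)
    (F P : Set (W → W)) (hYF : TopFractalOn F Y)
    (hP : P.Finite) (hPcont : ∀ p ∈ P, ContinuousOn p Y)
    (hPZ : (⋃ p ∈ P, p '' Y) = Z)
    (x₀ : W) (hYZ : Y ∩ Z = {x₀}) (hcomp : IsCompact (Y ∪ Z)) :
    TopFractalOn
      ({g | ∃ f ∈ F, g = fun x => if x ∈ Y then f x else f x₀} ∪
       {g | ∃ p ∈ P, g = fun x => if x ∈ Y then p x else p x₀})
      (Y ∪ Z) := by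
  classical
  obtain ⟨hYcomp, hFfin, hFcm, hFY, hFcontr⟩ := hYF
  have hFmaps : ∀ f ∈ F, f '' Y ⊆ Y := fun f hf => (hFcm f hf).2
  have hx₀ : x₀ ∈ Y ∩ Z := by rw [hYZ]; exact mem_singleton _
  have hx₀Y : x₀ ∈ Y := hx₀.1
  have hx₀Z : x₀ ∈ Z := hx₀.2
  have hZcomp : IsCompact Z := by
    rw [← hPZ]
    exact hP.isCompact_biUnion fun p hp => hYcomp.image_of_continuousOn (hPcont p hp)
  have hYcl : IsClosed Y := hYcomp.isClosed
  have hZcl : IsClosed Z := hZcomp.isClosed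
  set L : (W → W) → W → W := fun q x => if x ∈ Y then q x else q x₀ with hLdef
  suffices h : TopFractalOn ({g | ∃ f ∈ F, g = L f} ∪ {g | ∃ p ∈ P, g = L p}) (Y ∪ Z) by
    simpa only [hLdef] using h
  set G : Set (W → W) := {g | ∃ f ∈ F, g = L f} ∪ {g | ∃ p ∈ P, g = L p} with hGdef
  have hLY : ∀ (q : W → W), ∀ x ∈ Y, L q x = q x := fun q x hx => if_pos hx
  have hLx₀ : ∀ q : W → W, L q x₀ = q x₀ := fun q => if_pos hx₀Y
  have hLZ : ∀ (q : W → W), ∀ z ∈ Z, L q z = q x₀ := by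
    intro q z hz
    by_cases hzY : z ∈ Y
    · have hz0 : z = x₀ := by
        have : z ∈ Y ∩ Z := ⟨hzY, hz⟩
        rwa [hYZ] at this
      rw [hz0, hLx₀]
    · exact if_neg hzY
  have hpZ : ∀ p ∈ P, ∀ y ∈ Y, p y ∈ Z := fun p hp y hy =>
    hPZ ▸ mem_biUnion hp (mem_image_of_mem p hy)
  have hGelim : ∀ g ∈ G, ∃ q, g = L q ∧ ContinuousOn q Y ∧ q '' Y ⊆ Y ∪ Z ∧ q x₀ ∈ Y ∪ Z := by
    rintro g (⟨f, hf, rfl⟩ | ⟨p, hp, rfl⟩)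
    · exact ⟨f, rfl, (hFcm f hf).1, (hFmaps f hf).trans subset_union_left,
        Or.inl (hFmaps f hf (mem_image_of_mem f hx₀Y))⟩
    · refine ⟨p, rfl, hPcont p hp, ?_, Or.inr (hpZ p hp x₀ hx₀Y)⟩
      rintro _ ⟨y, hy, rfl⟩
      exact Or.inr (hpZ p hp y hy)
  have hGmapsPt : ∀ g ∈ G, ∀ x ∈ Y ∪ Z, g x ∈ Y ∪ Z := by
    intro g hg x hx
    obtain ⟨q, rfl, _, hq, hq0⟩ := hGelim g hg
    by_cases hxY : x ∈ Y
    · rw [hLY q x hxY]; exact hq (mem_image_of_mem _ hxY)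
    · rw [hLZ q x (hx.resolve_left hxY)]; exact hq0
  have hGmaps : ∀ g ∈ G, g '' (Y ∪ Z) ⊆ Y ∪ Z := by
    rintro g hg _ ⟨x, hx, rfl⟩; exact hGmapsPt g hg x hx
  have hGconstZ : ∀ g ∈ G, ∀ z ∈ Z, g z = g x₀ := by
    intro g hg z hz
    obtain ⟨q, rfl, -, -, -⟩ := hGelim g hg
    rw [hLZ q z hz, hLx₀]
  refine ⟨hcomp, ?_, ?_, ?_, ?_⟩
  · -- finiteness
    apply Set.Finite.subset ((hFfin.image L).union (hP.image L))
    rintro g (⟨f, hf, rfl⟩ | ⟨p, hp, rfl⟩)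
    · exact Or.inl ⟨f, hf, rfl⟩
    · exact Or.inr ⟨p, hp, rfl⟩
  · -- continuity and invariance
    intro g hg
    obtain ⟨q, rfl, hqc, hqm, hq0⟩ := hGelim g hg
    refine ⟨?_, hGmaps _ hg⟩
    intro x _
    have hY' : ContinuousWithinAt (L q) Y x := by
      by_cases hxY : x ∈ Y
      · exact (hqc x hxY).congr (fun y hy => hLY q y hy) (hLY q x hxY)
      · exact continuousWithinAt_of_notMem_closure (by rwa [hYcl.closure_eq])
    have hZ' : ContinuousWithinAt (L q) Z x := by
      by_cases hxZ : x ∈ Z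
      · exact (continuousWithinAt_const (b := q x₀)).congr
          (fun y hy => hLZ q y hy) (hLZ q x hxZ)
      · exact continuousWithinAt_of_notMem_closure (by rwa [hZcl.closure_eq])
    exact hY'.union hZ'
  · -- surjectivity of the union
    apply Subset.antisymm
    · exact iUnion₂_subset hGmaps
    · intro w hw
      rcases hw with hwY | hwZ
      · rw [← hFY, mem_iUnion₂] at hwY
        obtain ⟨f, hf, y, hy, rfl⟩ := hwY
        exact mem_iUnion₂.mpr ⟨L f, Or.inl ⟨f, hf, rfl⟩, ⟨y, Or.inl hy, hLY f y hy⟩⟩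
      · rw [← hPZ, mem_iUnion₂] at hwZ
        obtain ⟨p, hp, y, hy, rfl⟩ := hwZ
        exact mem_iUnion₂.mpr ⟨L p, Or.inr ⟨p, hp, rfl⟩, ⟨y, Or.inl hy, hLY p y hy⟩⟩
  · -- topological contractivity
    intro 𝒰 h𝒰 hcov
    have hcovY : Y ⊆ ⋃₀ 𝒰 := fun y hy => hcov (Or.inl hy)
    obtain ⟨n₀, hn₀⟩ := hFcontr 𝒰 h𝒰 hcovY
    have key : ∀ p : W → W, ∃ n : ℕ, p ∈ P → ∀ l : List (W → W), l.length = n →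
        (∀ f ∈ l, f ∈ F) → ∃ U ∈ 𝒰, p '' (Comp l '' Y) ⊆ U := by
      intro p
      by_cases hp : p ∈ P
      · have hVopen : ∀ V ∈ {V : Set W | IsOpen V ∧ ∃ U ∈ 𝒰, V ∩ Y ⊆ p ⁻¹' U}, IsOpen V :=
          fun V hV => hV.1
        have hYV : Y ⊆ ⋃₀ {V : Set W | IsOpen V ∧ ∃ U ∈ 𝒰, V ∩ Y ⊆ p ⁻¹' U} := by
          intro y hy
          obtain ⟨U, hU, hyU⟩ := hcov (Or.inr (hpZ p hp y hy))
          have hmem' : p ⁻¹' U ∈ nhdsWithin y Y :=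
            (hPcont p hp y hy).preimage_mem_nhdsWithin ((h𝒰 U hU).mem_nhds hyU)
          obtain ⟨V, hVo, hyV, hVsub⟩ := mem_nhdsWithin.mp hmem'
          exact ⟨V, ⟨hVo, U, hU, hVsub⟩, hyV⟩
        obtain ⟨n, hn⟩ := hFcontr _ hVopen hYV
        refine ⟨n, fun _ l hl hm => ?_⟩
        obtain ⟨V, ⟨hVo, U, hU, hVU⟩, hsub⟩ := hn l hl hm
        refine ⟨U, hU, ?_⟩
        rintro _ ⟨x, hx, rfl⟩
        exact hVU ⟨hsub hx, comp_maps' (fun f hf => hFmaps f (hm f hf)) hx⟩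
      · exact ⟨0, fun h => absurd h hp⟩
    choose np hnp using key
    refine ⟨max n₀ (hP.toFinset.sup np) + 1, ?_⟩
    set M := hP.toFinset.sup np with hMdef
    intro l hlen hlmem
    have lemA : ∀ m : List (W → W), (∀ g ∈ m, ∃ f ∈ F, g = L f) → m ≠ [] →
        ∃ m' : List (W → W), m'.length = m.length ∧ (∀ f ∈ m', f ∈ F) ∧
          Comp m '' (Y ∪ Z) ⊆ Comp m' '' Y := by
      intro m
      induction m with
      | nil => intro _ h; exact absurd rfl h
      | cons g t ih =>
        intro hmem _
        obtain ⟨f, hf, rfl⟩ := hmem g (List.mem_cons_self)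
        rcases eq_or_ne t [] with rfl | ht
        · refine ⟨[f], rfl, by simp [hf], ?_⟩
          rintro _ ⟨x, hx, rfl⟩
          by_cases hxY : x ∈ Y
          · exact ⟨x, hxY, (hLY f x hxY).symm⟩
          · exact ⟨x₀, hx₀Y, (hLZ f x (hx.resolve_left hxY)).symm⟩
        · obtain ⟨m', hlen', hmem', hsub'⟩ :=
            ih (fun g hg => hmem g (List.mem_cons_of_mem _ hg)) ht
          refine ⟨f :: m', by simp [hlen'], ?_, ?_⟩
          · intro f' hf'
            rcases List.mem_cons.mp hf' with rfl | h'
            · exact hf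
            · exact hmem' f' h'
          · rw [comp_cons', comp_cons', Set.image_comp, Set.image_comp]
            refine (Set.image_mono hsub').trans ?_
            rintro _ ⟨w, hw, rfl⟩
            have hwY : w ∈ Y := comp_maps' (fun f' hf' => hFmaps f' (hmem' f' hf')) hw
            exact ⟨w, hw, (hLY f w hwY).symm⟩
    cases l with
    | nil => simp at hlen
    | cons g₁ rest =>
      have hrestlen : rest.length = max n₀ M := by
        have := hlen
        simp only [List.length_cons] at this
        omega
      have hrestG : ∀ g ∈ rest, g ∈ G := fun g hg => hlmem g (List.mem_cons_of_mem _ hg)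
      by_cases hall : ∀ g ∈ rest, g ∈ {g | ∃ f ∈ F, g = L f}
      · rcases hlmem g₁ (List.mem_cons_self) with hg₁F | hg₁P
        · -- all maps are F-lifts
          have halll : ∀ g ∈ g₁ :: rest, ∃ f ∈ F, g = L f := by
            intro g hg
            rcases List.mem_cons.mp hg with rfl | h
            · exact hg₁F
            · exact hall g h
          obtain ⟨m', hlen', hmem', hsub'⟩ := lemA _ halll (by simp)
          have hlen'' : m'.length = max n₀ M + 1 := hlen'.trans hlen
          obtain ⟨U, hU, hUsub⟩ := words_mono' hFmaps (fun S => ∃ U ∈ 𝒰, S ⊆ U)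
            (fun S T hST h => by obtain ⟨U, hU, h2⟩ := h; exact ⟨U, hU, hST.trans h2⟩)
            ((le_max_left n₀ M).trans (Nat.le_succ _)) hn₀ m' hlen'' hmem'
          exact ⟨U, hU, hsub'.trans hUsub⟩
        · -- head is a P-lift, the rest are F-lifts
          obtain ⟨p, hp, rfl⟩ := hg₁P
          have hnpM : np p ≤ max n₀ M :=
            le_trans (Finset.le_sup (hP.mem_toFinset.mpr hp)) (le_max_right _ _)
          have hwords := words_mono' hFmaps (fun S => ∃ U ∈ 𝒰, p '' S ⊆ U)
            (fun S T hST h => by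
              obtain ⟨U, hU, h2⟩ := h; exact ⟨U, hU, (Set.image_mono (f := p) hST).trans h2⟩)
            hnpM (hnp p hp)
          rcases eq_or_ne rest [] with rfl | hrest
          · obtain ⟨U, hU, hUsub⟩ := hwords [] hrestlen (by simp)
            refine ⟨U, hU, ?_⟩
            rintro _ ⟨x, hx, rfl⟩
            apply hUsub
            by_cases hxY : x ∈ Y
            · exact ⟨x, ⟨x, hxY, rfl⟩, (hLY p x hxY).symm⟩
            · exact ⟨x₀, ⟨x₀, hx₀Y, rfl⟩, (hLZ p x (hx.resolve_left hxY)).symm⟩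
          · obtain ⟨m', hlen', hmem', hsub'⟩ := lemA rest hall hrest
            obtain ⟨U, hU, hUsub⟩ := hwords m' (hlen'.trans hrestlen) hmem'
            refine ⟨U, hU, ?_⟩
            rw [comp_cons', Set.image_comp]
            refine (Set.image_mono hsub').trans ?_
            rintro _ ⟨w, hw, rfl⟩
            have hwY : w ∈ Y := comp_maps' (fun f' hf' => hFmaps f' (hmem' f' hf')) hw
            rw [hLY p w hwY]
            exact hUsub ⟨w, hw, rfl⟩
      · -- the tail contains a P-lift: everything collapses to a point
        push_neg at hall
        obtain ⟨g, hgrest, hgnF⟩ := hall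
        obtain ⟨p, hp, rfl⟩ := (hrestG g hgrest).resolve_left hgnF
        obtain ⟨a, b, rfl⟩ := List.append_of_mem hgrest
        have hmem₁ : ∀ g' ∈ g₁ :: a, g' ∈ G := by
          intro g' hg'
          rcases List.mem_cons.mp hg' with rfl | h
          · exact hlmem g' (List.mem_cons_self)
          · exact hrestG g' (List.mem_append_left _ h)
        have hb : Comp b '' (Y ∪ Z) ⊆ Y ∪ Z :=
          comp_maps' fun g' hg' =>
            hGmaps g' (hrestG g' (List.mem_append_right _ (List.mem_cons_of_mem _ hg')))
        have hLpZ : ∀ x ∈ Y ∪ Z, L p x ∈ Z := by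
          intro x hx
          by_cases hxY : x ∈ Y
          · rw [hLY p x hxY]; exact hpZ p hp x hxY
          · rw [hLZ p x (hx.resolve_left hxY)]; exact hpZ p hp x₀ hx₀Y
        have lemC : ∀ m : List (W → W), m ≠ [] → (∀ g' ∈ m, g' ∈ G) → ∀ S : Set W, S ⊆ Z →
            Comp m '' S ⊆ {Comp m x₀} := by
          intro m
          induction m with
          | nil => intro h; exact absurd rfl h
          | cons g' t ih =>
            intro _ hmem S hS
            rcases eq_or_ne t [] with rfl | ht
            · rintro _ ⟨x, hx, rfl⟩
              exact hGconstZ g' (hmem g' (List.mem_cons_self)) x (hS hx)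
            · rw [comp_cons', Set.image_comp]
              refine (Set.image_mono (f := g')
                (ih ht (fun g'' hg'' => hmem g'' (List.mem_cons_of_mem _ hg'')) S hS)).trans ?_
              rintro _ ⟨x, hx, rfl⟩
              rw [mem_singleton_iff] at hx ⊢
              rw [hx]; rfl
        have hcompeq : Comp (g₁ :: (a ++ L p :: b)) = Comp (g₁ :: a) ∘ (L p ∘ Comp b) := by
          rw [show g₁ :: (a ++ L p :: b) = (g₁ :: a) ++ (L p :: b) by simp,
            comp_append']
          rfl
        have hcY : Comp (g₁ :: a) x₀ ∈ Y ∪ Z :=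
          comp_maps' (fun g' hg' => hGmaps g' (hmem₁ g' hg'))
            (mem_image_of_mem _ (Or.inl hx₀Y))
        obtain ⟨U, hU, hcU⟩ := hcov hcY
        refine ⟨U, hU, ?_⟩
        rw [hcompeq, Set.image_comp, Set.image_comp]
        have hSsub : L p '' (Comp b '' (Y ∪ Z)) ⊆ Z := by
          rintro _ ⟨x, hx, rfl⟩; exact hLpZ x (hb hx)
        exact (lemC (g₁ :: a) (by simp) hmem₁ _ hSsub).trans
          (singleton_subset_iff.mpr hcU)
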